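/- Let V be a valuation ring and V → S an injective finite ring map with S an integral domain. Then S is a free V-module and the element 1 ∈ S is part of a V-basis of S; consequently V → S splits as a map of V-modules. -/

import Mathlib

/-- In a valuation ring, any finite family has a dvd-minimal element. -/
theorem exists_dvd_min {V : Type*} [CommRing V] [IsDomain V] [ValuationRing V]
    {α : Type*} (g : α → V) (T : Finset α) (hT : T.Nonempty) :
    ∃ i ∈ T, ∀ j ∈ T, g i ∣ g j := by
  classical
  induction T using Finset.induction_on with
  | empty => exact absurd hT (by simp)
  | @insert b s hb ih =>
    by_cases hs : s.Nonempty
    · obtain ⟨i, hi, hdvd⟩ := ih hs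
      rcases ValuationRing.dvd_total (g i) (g b) with h | h
      · exact ⟨i, Finset.mem_insert_of_mem hi, by
          intro j hj; rcases Finset.mem_insert.mp hj with rfl | hj
          · exact h
          · exact hdvd j hj⟩
      · exact ⟨b, Finset.mem_insert_self _ _, by
          intro j hj; rcases Finset.mem_insert.mp hj with rfl | hj
          · exact dvd_rfl
          · exact h.trans (hdvd j hj)⟩
    · rw [Finset.not_nonempty_iff_eq_empty] at hs
      subst hs
      exact ⟨b, Finset.mem_insert_self _ _, by
        intro j hj; simp at hj; subst hj; exact dvd_rfl⟩

/-- A spanning family with a nontrivial relation, over a valuation ring with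
torsion-free module, can be shrunk by one while still spanning. -/
theorem span_shrink {V M : Type*} [CommRing V] [IsDomain V]
    [ValuationRing V] [AddCommGroup M] [Module V M] [NoZeroSMulDivisors V M]
    {n : ℕ} {s : Fin n → M} (hs : Submodule.span V (Set.range s) = ⊤)
    {g : Fin n → V} (hg0 : ∑ j, g j • s j = 0) {i₁ : Fin n}
    (hgi₁ : g i₁ ≠ 0) :
    ∃ t : Fin (n - 1) → M, Submodule.span V (Set.range t) = ⊤ := by
  classical
  obtain ⟨m, rfl⟩ : ∃ m, n = m + 1 := ⟨n - 1, (Nat.succ_pred_eq_of_pos i₁.pos).symm⟩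
  set T : Finset (Fin (m + 1)) := Finset.univ.filter (fun j => g j ≠ 0) with hT
  have hi₁T : i₁ ∈ T := by simp [hT, hgi₁]
  obtain ⟨i₀, hi₀T, hdvd⟩ := exists_dvd_min g T ⟨i₁, hi₁T⟩
  have hgi₀ : g i₀ ≠ 0 := by simpa [hT] using (Finset.mem_filter.mp hi₀T).2
  have hc : ∀ j, ∃ c : V, g j = g i₀ * c := by
    intro j
    by_cases h : g j = 0
    · exact ⟨0, by simp [h]⟩
    · exact (hdvd j (by simp [hT, h]))
  choose c hc using hc
  have hci₀ : c i₀ = 1 := by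
    have := hc i₀
    nth_rewrite 1 [← mul_one (g i₀)] at this
    exact (mul_left_cancel₀ hgi₀ this).symm
  have hsum : (∑ j, c j • s j) = 0 := by
    have h1 : g i₀ • (∑ j, c j • s j) = 0 := by
      rw [Finset.smul_sum]
      simp_rw [smul_smul, ← hc]
      exact hg0
    rcases smul_eq_zero.mp h1 with h | h
    · exact absurd h hgi₀
    · exact h
  refine ⟨s ∘ i₀.succAbove, ?_⟩
  have hsplit : s i₀ = -∑ k : Fin m, c (i₀.succAbove k) • s (i₀.succAbove k) := by
    have h2 := Fin.sum_univ_succAbove (fun j => c j • s j) i₀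
    rw [hsum, hci₀, one_smul] at h2
    exact eq_neg_of_add_eq_zero_left h2.symm
  rw [eq_top_iff, ← hs, Submodule.span_le]
  rintro x ⟨j, rfl⟩
  rcases eq_or_ne j i₀ with rfl | hj
  · rw [hsplit]
    refine Submodule.neg_mem _ (Submodule.sum_mem _ fun k _ => ?_)
    exact Submodule.smul_mem _ _ (Submodule.subset_span ⟨k, rfl⟩)
  · obtain ⟨k, hk⟩ := Fin.exists_succAbove_eq hj
    exact hk ▸ Submodule.subset_span ⟨k, rfl⟩

/-- A finitely generated torsion-free module over a valuation ring is free. -/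
theorem exists_basis_of_valuationRing (V M : Type*) [CommRing V] [IsDomain V]
    [ValuationRing V] [AddCommGroup M] [Module V M] [Module.Finite V M]
    [NoZeroSMulDivisors V M] : ∃ n : ℕ, Nonempty (Module.Basis (Fin n) V M) := by
  classical
  have hP : ∃ n : ℕ, ∃ s : Fin n → M, Submodule.span V (Set.range s) = ⊤ := by
    obtain ⟨n, s, hs⟩ := Module.Finite.exists_fin (R := V) (M := M)
    exact ⟨n, s, hs⟩
  obtain ⟨s, hs⟩ := Nat.find_spec hP
  refine ⟨Nat.find hP, ⟨Module.Basis.mk ?_ hs.ge⟩⟩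
  rw [Fintype.linearIndependent_iff]
  by_contra hcon
  push_neg at hcon
  obtain ⟨g, hg0, i₁, hgi₁⟩ := hcon
  obtain ⟨t, ht⟩ := span_shrink hs hg0 hgi₁
  exact Nat.find_min hP (Nat.sub_lt i₁.pos one_pos) ⟨t, ht⟩
universe u

/-- If `V` is a valuation ring and `V → S` an injective finite ring map with `S` a
domain, then `S` is a free `V`-module with a basis containing `1`; consequently
`V → S` splits as a map of `V`-modules. -/
theorem free_basis_one_of_finite_domain_extension
    (V S : Type u) [CommRing V] [IsDomain V] [ValuationRing V]
    [CommRing S] [IsDomain S] [Algebra V S] [Module.Finite V S]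
    (hinj : Function.Injective (algebraMap V S)) :
    Module.Free V S ∧
    (∃ (ι : Type u) (b : Module.Basis ι V S) (i : ι), b i = 1) ∧
    ∃ g : S →ₗ[V] V, g.comp (Algebra.linearMap V S) = LinearMap.id := by
  classical
  haveI : NoZeroSMulDivisors V S := ⟨fun {c x} h => by
    rw [Algebra.smul_def] at h
    rcases mul_eq_zero.mp h with h | h
    · exact Or.inl (hinj (by rw [h, map_zero]))
    · exact Or.inr h⟩
  obtain ⟨n, ⟨b⟩⟩ := exists_basis_of_valuationRing V S
  set a : Fin n →₀ V := b.repr 1 with ha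
  have hunit : ∃ i, IsUnit (a i) := by
    by_contra hcon
    push_neg at hcon
    have hmem : ∀ i, a i ∈ IsLocalRing.maximalIdeal V := fun i =>
      (IsLocalRing.mem_maximalIdeal _).mpr (hcon i)
    have hle : (⊤ : Submodule V S) ≤ (IsLocalRing.maximalIdeal V) • ⊤ := by
      intro s _
      have h1 : s = ∑ i, a i • (s * b i) := by
        calc s = s * 1 := (mul_one s).symm
        _ = s * ∑ i, a i • b i := by rw [b.sum_repr 1]
        _ = ∑ i, a i • (s * b i) := by rw [Finset.mul_sum]; simp_rw [mul_smul_comm]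
      rw [h1]
      exact Submodule.sum_mem _ fun i _ =>
        Submodule.smul_mem_smul (hmem i) Submodule.mem_top
    have := Submodule.eq_bot_of_le_smul_of_le_jacobson_bot (IsLocalRing.maximalIdeal V)
      ⊤ (Module.Finite.fg_top) hle
      (by rw [IsLocalRing.jacobson_eq_maximalIdeal ⊥ bot_ne_top])
    exact absurd ((Submodule.eq_bot_iff _).mp this 1 Submodule.mem_top) one_ne_zero
  obtain ⟨i, hu⟩ := hunit
  set c : Fin n → S := Function.update b i 1 with hcdef
  have hci : c i = 1 := Function.update_self i 1 b
  have hcne : ∀ j, j ≠ i → c j = b j := fun j hj => Function.update_of_ne hj 1 b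
  have hspan : ⊤ ≤ Submodule.span V (Set.range c) := by
    rw [← b.span_eq, Submodule.span_le]
    rintro x ⟨j, rfl⟩
    by_cases hj : j = i
    · subst hj
      have h1 : a j • b j = (1 : S) - ∑ k ∈ Finset.univ.erase j, a k • b k :=
        eq_sub_of_add_eq ((Finset.add_sum_erase _ (fun k => a k • b k)
          (Finset.mem_univ j)).trans (b.sum_repr 1))
      have h2 : a j • b j ∈ Submodule.span V (Set.range c) := by
        rw [h1]
        refine Submodule.sub_mem _ (Submodule.subset_span ⟨j, hci⟩)
          (Submodule.sum_mem _ fun k hk => ?_)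
        exact Submodule.smul_mem _ _
          (Submodule.subset_span ⟨k, hcne k (Finset.ne_of_mem_erase hk)⟩)
      have h3 := Submodule.smul_mem _ (↑hu.unit⁻¹ : V) h2
      rwa [smul_smul, IsUnit.val_inv_mul, one_smul] at h3
    · exact Submodule.subset_span ⟨j, hcne j hj⟩
  have hli : LinearIndependent V c := by
    rw [Fintype.linearIndependent_iff]
    intro g hg
    have hF : ∀ m : Fin n, (∑ j, g j * (b.repr (c j)) m) = 0 := by
      intro m
      have h0 := congrArg (fun x => b.repr x m) hg
      simpa [map_sum, Finsupp.finset_sum_apply] using h0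
    have hrepr : ∀ j m, (b.repr (c j)) m = if j = i then a m
        else if j = m then 1 else 0 := by
      intro j m
      by_cases hj : j = i
      · subst hj; simp [hci, ha]
      · rw [hcne j hj, b.repr_self]
        simp [Finsupp.single_apply, hj]
    have hgi : g i = 0 := by
      have h1 := hF i
      rw [Finset.sum_eq_single i] at h1
      · rw [hrepr i i, if_pos rfl] at h1
        exact (hu.mul_left_eq_zero).mp h1
      · intro j _ hj
        rw [hrepr j i, if_neg hj, if_neg hj, mul_zero]
      · simp
    intro k
    by_cases hk : k = i
    · subst hk; exact hgi
    · have h1 := hF k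
      rw [Finset.sum_eq_single k] at h1
      · rwa [hrepr k k, if_neg hk, if_pos rfl, mul_one] at h1
      · intro j _ hj
        by_cases hj' : j = i
        · subst hj'; rw [hgi, zero_mul]
        · rw [hrepr j k, if_neg hj', if_neg hj, mul_zero]
      · simp
  let c' : Module.Basis (Fin n) V S := Module.Basis.mk hli hspan
  have hc'i : c' i = 1 := by rw [Module.Basis.mk_apply]; exact hci
  let c'' : Module.Basis (ULift.{u} (Fin n)) V S := c'.reindex Equiv.ulift.symm
  have hc''i : c'' ⟨i⟩ = 1 := by
    rw [Module.Basis.reindex_apply]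
    exact hc'i
  refine ⟨Module.Free.of_basis b, ⟨ULift.{u} (Fin n), c'', ⟨i⟩, hc''i⟩,
    ⟨c'.coord i, ?_⟩⟩
  apply LinearMap.ext
  intro v
  simp only [LinearMap.comp_apply, LinearMap.id_apply, Algebra.linearMap_apply]
  rw [Algebra.algebraMap_eq_smul_one, ← hc'i, map_smul, Module.Basis.coord_apply, c'.repr_self]
  simp
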